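/- Let M >= 2 and N in {1,...,M}. Let Omega be a uniformly random subset of {1,...,M} of size N, and for vectors v_1,...,v_M in R^d define C_m(v_m) = (M/N) * v_m if m is in Omega and 0 otherwise. Then E[ || sum_{m=1}^M (C_m(v_m) - v_m) ||^2 ] = (M/N) * ((M-N)/(M-1)) * sum_{m=1}^M ||v_m||^2 - ((M-N)/(N(M-1))) * || sum_{m=1}^M v_m ||^2. -/

import Mathlib

open Finset

lemma card_filter_mem_pc {α : Type*} [DecidableEq α] (s : Finset α) (a : α)
    (ha : a ∈ s) (n : ℕ) (p : Finset α → Prop) [DecidablePred p] :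
    ((s.powersetCard (n+1)).filter (fun S => a ∈ S ∧ p S)).card
      = (((s.erase a).powersetCard n).filter (fun U => p (insert a U))).card := by
  apply Finset.card_bij' (fun S _ => S.erase a) (fun U _ => insert a U)
  · intro S hS
    simp only [mem_filter] at hS
    exact Finset.insert_erase hS.2.1
  · intro U hU
    simp only [mem_filter, mem_powersetCard] at hU
    have haU : a ∉ U := fun h => (Finset.mem_erase.1 (hU.1.1 h)).1 rfl
    exact Finset.erase_insert haU
  · intro S hS
    simp only [mem_filter, mem_powersetCard] at hS ⊢
    obtain ⟨⟨hsub, hcard⟩, haS, hpS⟩ := hS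
    refine ⟨⟨Finset.erase_subset_erase a hsub, ?_⟩, ?_⟩
    · rw [Finset.card_erase_of_mem haS, hcard]; rfl
    · rwa [Finset.insert_erase haS]
  · intro U hU
    simp only [mem_filter, mem_powersetCard] at hU ⊢
    obtain ⟨⟨hsub, hcard⟩, hpU⟩ := hU
    have haU : a ∉ U := fun h => (Finset.mem_erase.1 (hsub h)).1 rfl
    refine ⟨⟨?_, ?_⟩, Finset.mem_insert_self a U, hpU⟩
    · exact Finset.insert_subset ha (hsub.trans (Finset.erase_subset a s))
    · rw [Finset.card_insert_of_notMem haU, hcard]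

lemma count1 {α : Type*} [DecidableEq α] (s : Finset α) (a : α) (ha : a ∈ s) (n : ℕ) :
    ((s.powersetCard (n+1)).filter (fun S => a ∈ S)).card = (s.card - 1).choose n := by
  have h := card_filter_mem_pc s a ha n (fun _ => True)
  simp only [and_true, Finset.filter_true] at h
  rw [h, Finset.card_powersetCard, Finset.card_erase_of_mem ha]

lemma count2 {α : Type*} [DecidableEq α] (s : Finset α) (a b : α) (hab : a ≠ b)
    (ha : a ∈ s) (hb : b ∈ s) (n : ℕ) :
    ((s.powersetCard (n+2)).filter (fun S => a ∈ S ∧ b ∈ S)).card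
      = (s.card - 2).choose n := by
  rw [card_filter_mem_pc s a ha (n+1) (fun S => b ∈ S)]
  simp only [Finset.mem_insert, or_iff_right (Ne.symm hab)]
  rw [count1 (s.erase a) b (Finset.mem_erase.2 ⟨fun h => hab h.symm, hb⟩) n,
    Finset.card_erase_of_mem ha,
    show s.card - 1 - 1 = s.card - 2 from by omega]

lemma norm_sum_smul_sq {d M : ℕ} (g : Fin M → ℝ) (v : Fin M → EuclideanSpace ℝ (Fin d)) :
    ‖∑ m, g m • v m‖ ^ 2 = ∑ m, ∑ n, g m * g n * (inner ℝ (v m) (v n) : ℝ) := by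
  rw [← real_inner_self_eq_norm_sq]
  simp_rw [sum_inner, inner_sum, real_inner_smul_left, real_inner_smul_right, mul_assoc]

lemma main_aux (d M N : ℕ) (hM : 2 ≤ M) (hN1 : 1 ≤ N) (hNM : N ≤ M)
    (v : Fin M → EuclideanSpace ℝ (Fin d)) (q1 q2 : ℝ)
    (hE1 : ∀ m : Fin M,
      ((((Finset.powersetCard N (Finset.univ : Finset (Fin M))).filter
        (fun S => m ∈ S)).card : ℝ)) = q1)
    (hE2 : ∀ m n : Fin M, m ≠ n →
      ((((Finset.powersetCard N (Finset.univ : Finset (Fin M))).filter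
        (fun S => m ∈ S ∧ n ∈ S)).card : ℝ)) = q2)
    (hrel1 : q1 * M = (M.choose N : ℝ) * N)
    (hrel2 : q2 * ((M:ℝ) - 1) = q1 * ((N:ℝ) - 1)) :
    ((Finset.powersetCard N (Finset.univ : Finset (Fin M))).card : ℝ)⁻¹ *
        ∑ S ∈ Finset.powersetCard N (Finset.univ : Finset (Fin M)),
          ‖∑ m, ((if m ∈ S then ((M : ℝ) / (N : ℝ)) • v m else 0) - v m)‖ ^ 2 =
      ((M : ℝ) / (N : ℝ)) * (((M : ℝ) - (N : ℝ)) / ((M : ℝ) - 1)) * ∑ m, ‖v m‖ ^ 2 -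
        (((M : ℝ) - (N : ℝ)) / ((N : ℝ) * ((M : ℝ) - 1))) * ‖∑ m, v m‖ ^ 2 := by
  classical
  set P := Finset.powersetCard N (Finset.univ : Finset (Fin M)) with hP
  set c : ℝ := (M : ℝ) / (N : ℝ) with hc
  set K : ℝ := (P.card : ℝ) with hKdef
  have hco : ∀ (S : Finset (Fin M)) (m : Fin M),
      ((if m ∈ S then c • v m else 0) - v m)
        = (c * (if m ∈ S then (1:ℝ) else 0) - 1) • v m := by
    intro S m; split_ifs <;> simp [sub_smul]
  have hAB : ∀ m n : Fin M,
      (∑ S ∈ P, ((c * (if m ∈ S then (1:ℝ) else 0) - 1) *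
          (c * (if n ∈ S then (1:ℝ) else 0) - 1)))
        = (c^2*q2 - 2*c*q1 + K) + (if m = n then c^2*(q1 - q2) else 0) := by
    intro m n
    have expand : ∀ S : Finset (Fin M),
        (c * (if m ∈ S then (1:ℝ) else 0) - 1) * (c * (if n ∈ S then (1:ℝ) else 0) - 1)
          = c^2 * (if m ∈ S ∧ n ∈ S then (1:ℝ) else 0)
            - c * (if m ∈ S then (1:ℝ) else 0) - c * (if n ∈ S then (1:ℝ) else 0) + 1 := by
      intro S; by_cases h1 : m ∈ S <;> by_cases h2 : n ∈ S <;> simp [h1, h2] <;> ring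
    simp_rw [expand]
    rw [Finset.sum_add_distrib, Finset.sum_sub_distrib, Finset.sum_sub_distrib,
      ← Finset.mul_sum, ← Finset.mul_sum, ← Finset.mul_sum, Finset.sum_const,
      Finset.sum_boole, Finset.sum_boole, Finset.sum_boole]
    rw [nsmul_eq_mul, mul_one]
    by_cases hmn : m = n
    · subst hmn
      simp only [and_self]
      rw [hE1 m, if_pos trivial]
      ring
    · rw [hE2 m n hmn, hE1 m, hE1 n, if_neg hmn]
      ring
  have step1 : ∑ S ∈ P, ‖∑ m, ((if m ∈ S then c • v m else 0) - v m)‖ ^ 2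
      = ∑ m, ∑ n, (((c^2*q2 - 2*c*q1 + K) + (if m = n then c^2*(q1-q2) else 0))
          * (inner ℝ (v m) (v n) : ℝ)) := by
    calc ∑ S ∈ P, ‖∑ m, ((if m ∈ S then c • v m else 0) - v m)‖ ^ 2
        = ∑ S ∈ P, ∑ m, ∑ n, ((c * (if m ∈ S then (1:ℝ) else 0) - 1) *
            (c * (if n ∈ S then (1:ℝ) else 0) - 1) * (inner ℝ (v m) (v n) : ℝ)) := by
          refine Finset.sum_congr rfl fun S _ => ?_
          simp_rw [hco S]
          exact norm_sum_smul_sq _ v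
      _ = ∑ m, ∑ n, ∑ S ∈ P, ((c * (if m ∈ S then (1:ℝ) else 0) - 1) *
            (c * (if n ∈ S then (1:ℝ) else 0) - 1) * (inner ℝ (v m) (v n) : ℝ)) := by
          rw [Finset.sum_comm]
          exact Finset.sum_congr rfl fun m _ => Finset.sum_comm
      _ = _ := by
          refine Finset.sum_congr rfl fun m _ => Finset.sum_congr rfl fun n _ => ?_
          rw [← Finset.sum_mul, hAB m n]
  have hT : (∑ m, ∑ n, (inner ℝ (v m) (v n) : ℝ)) = ‖∑ m, v m‖ ^ 2 := by
    rw [← real_inner_self_eq_norm_sq]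
    simp_rw [sum_inner, inner_sum]
  have hD : ∀ m : Fin M, (inner ℝ (v m) (v m) : ℝ) = ‖v m‖ ^ 2 := fun m =>
    real_inner_self_eq_norm_sq _
  have step2 : ∑ S ∈ P, ‖∑ m, ((if m ∈ S then c • v m else 0) - v m)‖ ^ 2
      = (c^2*q2 - 2*c*q1 + K) * ‖∑ m, v m‖ ^ 2 + c^2*(q1-q2) * ∑ m, ‖v m‖ ^ 2 := by
    rw [step1]
    have : ∀ m : Fin M, ∑ n, (((c^2*q2 - 2*c*q1 + K) + (if m = n then c^2*(q1-q2) else 0))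
        * (inner ℝ (v m) (v n) : ℝ))
        = (c^2*q2 - 2*c*q1 + K) * (∑ n, (inner ℝ (v m) (v n) : ℝ))
          + c^2*(q1-q2) * ‖v m‖ ^ 2 := by
      intro m
      simp_rw [add_mul, Finset.sum_add_distrib, ← Finset.mul_sum, ite_mul, zero_mul]
      rw [Finset.sum_ite_eq]
      simp [hD m]
    simp_rw [this]
    rw [Finset.sum_add_distrib, ← Finset.mul_sum, ← Finset.mul_sum, hT]
  rw [step2]
  -- final algebra
  have hKval : K = (M.choose N : ℝ) := by
    rw [hKdef, hP, Finset.card_powersetCard, Finset.card_univ, Fintype.card_fin]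
  have hK0 : (0:ℝ) < K := by
    rw [hKval]; exact_mod_cast Nat.choose_pos hNM
  have hN0 : (N:ℝ) ≠ 0 := by positivity
  have hM0 : (M:ℝ) ≠ 0 := by positivity
  have hM1 : (M:ℝ) - 1 ≠ 0 := by
    have : (2:ℝ) ≤ (M:ℝ) := by exact_mod_cast hM
    linarith
  have hq1 : q1 = K * N / M := by
    rw [eq_div_iff hM0, hKval]; exact hrel1
  have hq2 : q2 = K * (N:ℝ) * ((N:ℝ)-1) / ((M:ℝ) * ((M:ℝ)-1)) := by
    rw [eq_div_iff (mul_ne_zero hM0 hM1), hKval]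
    linear_combination (M:ℝ) * hrel2 + ((N:ℝ)-1) * hrel1
  rw [hq2, hq1, hc]
  field_simp
  ring

theorem stmt2 (d M N : ℕ) (hM : 2 ≤ M) (hN1 : 1 ≤ N) (hNM : N ≤ M)
    (v : Fin M → EuclideanSpace ℝ (Fin d)) :
    ((Finset.powersetCard N (Finset.univ : Finset (Fin M))).card : ℝ)⁻¹ *
        ∑ S ∈ Finset.powersetCard N (Finset.univ : Finset (Fin M)),
          ‖∑ m, ((if m ∈ S then ((M : ℝ) / (N : ℝ)) • v m else 0) - v m)‖ ^ 2 =
      ((M : ℝ) / (N : ℝ)) * (((M : ℝ) - (N : ℝ)) / ((M : ℝ) - 1)) * ∑ m, ‖v m‖ ^ 2 -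
        (((M : ℝ) - (N : ℝ)) / ((N : ℝ) * ((M : ℝ) - 1))) * ‖∑ m, v m‖ ^ 2 := by
  classical
  have hMuniv : (Finset.univ : Finset (Fin M)).card = M := by simp
  by_cases hN : N = 1
  · subst hN
    refine main_aux d M 1 hM hN1 hNM v 1 0 ?_ ?_ ?_ ?_
    · intro m
      rw [show (1:ℕ) = 0 + 1 from rfl, count1 Finset.univ m (Finset.mem_univ m) 0, hMuniv]
      simp
    · intro m n hmn
      norm_cast
      rw [Finset.card_eq_zero, Finset.filter_eq_empty_iff]
      intro S hS
      rw [Finset.mem_powersetCard] at hS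
      obtain ⟨a, rfl⟩ := Finset.card_eq_one.1 hS.2
      simp only [Finset.mem_singleton, not_and]
      rintro rfl
      exact fun h => hmn h.symm
    · simp [Nat.choose_one_right]
    · push_cast; ring
  · obtain ⟨k, rfl⟩ : ∃ k, N = k + 2 := ⟨N - 2, by omega⟩
    have h1 : ((M - 1 : ℕ) : ℝ) = (M : ℝ) - 1 := by
      rw [Nat.cast_sub (by omega : 1 ≤ M)]; norm_num
    refine main_aux d M (k+2) hM hN1 hNM v ((M-1).choose (k+1) : ℝ) ((M-2).choose k : ℝ)
      ?_ ?_ ?_ ?_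
    · intro m
      rw [show k + 2 = (k + 1) + 1 from rfl,
        count1 Finset.univ m (Finset.mem_univ m) (k+1), hMuniv]
    · intro m n hmn
      rw [count2 Finset.univ m n hmn (Finset.mem_univ m) (Finset.mem_univ n) k, hMuniv]
    · have h := Nat.add_one_mul_choose_eq (M-1) (k+1)
      rw [show (M-1) + 1 = M from by omega] at h
      have h' : ((M:ℝ)) * ((M-1).choose (k+1) : ℝ)
          = (M.choose (k+2) : ℝ) * ((k:ℝ) + 2) := by exact_mod_cast h
      push_cast
      linear_combination h'
    · have h := Nat.add_one_mul_choose_eq (M-2) k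
      rw [show (M-2) + 1 = M - 1 from by omega] at h
      have h' : ((M:ℝ) - 1) * ((M-2).choose k : ℝ)
          = ((M-1).choose (k+1) : ℝ) * ((k:ℝ) + 1) := by
        rw [← h1]; exact_mod_cast h
      push_cast
      linear_combination h'
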